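/- Let d = 4, 𝕊 = {{1,2},{2,3},{3,4},{1,4}}, X_1 = [r] for some r ∈ ℕ, and X_2 = X_3 = X_4 = [2]. Then for every consistent family P_𝕊 ∈ 𝒫_𝕊^cons, R(P_𝕊) = 2 max_{k,ℓ ∈ [2]} { p_{••kℓ} − p_{•2k•} − ∑_{i=1}^r min(p_{i1••}, p_{i••ℓ}) }_+, where p_{••kℓ} = P_{{3,4}}({(k,ℓ)}), p_{•2k•} = P_{{2,3}}({(2,k)}), p_{i1••} = P_{{1,2}}({(i,1)}), p_{i••ℓ} = P_{{1,4}}({(i,ℓ)}), and y_+ = max(y,0). -/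

import Mathlib

/-- The family `(P_{{1,2}}, P_{{2,3}}, P_{{3,4}}, P_{{1,4}})` of mass functions on
`[r] × [2] × [2] × [2]` consists of probability mass functions. -/
def ProbChain (r : ℕ) (p12 : Fin r → Fin 2 → ℝ) (p23 p34 : Fin 2 → Fin 2 → ℝ)
    (p14 : Fin r → Fin 2 → ℝ) : Prop :=
  (∀ i j, 0 ≤ p12 i j) ∧ (∀ j k, 0 ≤ p23 j k) ∧ (∀ k l, 0 ≤ p34 k l) ∧
    (∀ i l, 0 ≤ p14 i l) ∧ (∑ i, ∑ j, p12 i j = 1) ∧ (∑ j, ∑ k, p23 j k = 1) ∧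
    (∑ k, ∑ l, p34 k l = 1) ∧ (∑ i, ∑ l, p14 i l = 1)

/-- Consistency of the chain family: the overlapping single-coordinate margins agree. -/
def ConsChain (r : ℕ) (p12 : Fin r → Fin 2 → ℝ) (p23 p34 : Fin 2 → Fin 2 → ℝ)
    (p14 : Fin r → Fin 2 → ℝ) : Prop :=
  (∀ i, ∑ j, p12 i j = ∑ l, p14 i l) ∧
    (∀ j, ∑ i, p12 i j = ∑ k, p23 j k) ∧
    (∀ k, ∑ j, p23 j k = ∑ l, p34 k l) ∧
    (∀ l, ∑ k, p34 k l = ∑ i, p14 i l)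

/-- The incompatibility index `R(P_𝕊)` for `𝕊 = {{1,2},{2,3},{3,4},{1,4}}`. -/
noncomputable def RChain (r : ℕ) (p12 : Fin r → Fin 2 → ℝ) (p23 p34 : Fin 2 → Fin 2 → ℝ)
    (p14 : Fin r → Fin 2 → ℝ) : ℝ :=
  sSup {t | ∃ (f12 : Fin r → Fin 2 → ℝ) (f23 f34 : Fin 2 → Fin 2 → ℝ)
      (f14 : Fin r → Fin 2 → ℝ),
    (∀ i j, -1 ≤ f12 i j) ∧ (∀ j k, -1 ≤ f23 j k) ∧ (∀ k l, -1 ≤ f34 k l) ∧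
    (∀ i l, -1 ≤ f14 i l) ∧
    (∀ i j k l, 0 ≤ f12 i j + f23 j k + f34 k l + f14 i l) ∧
    t = -(1 / 4) * ((∑ i, ∑ j, f12 i j * p12 i j) + (∑ j, ∑ k, f23 j k * p23 j k) +
          (∑ k, ∑ l, f34 k l * p34 k l) + (∑ i, ∑ l, f14 i l * p14 i l))}

open Finset

abbrev IsGlue (r : ℕ) (p12 : Fin r → Fin 2 → ℝ) (p23 p34 : Fin 2 → Fin 2 → ℝ)
    (p14 : Fin r → Fin 2 → ℝ) (T : Fin r → Fin 2 → Fin 2 → ℝ)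
    (ν : Fin 2 → Fin 2 → Fin 2 → ℝ) : Prop :=
  (∀ i j l, 0 ≤ T i j l) ∧ (∀ j k l, 0 ≤ ν j k l) ∧
  (∀ i j, ∑ l, T i j l ≤ p12 i j) ∧ (∀ i l, ∑ j, T i j l ≤ p14 i l) ∧
  (∀ j k, ∑ l, ν j k l ≤ p23 j k) ∧ (∀ k l, ∑ j, ν j k l ≤ p34 k l) ∧
  (∀ j l, ∑ i, T i j l = ∑ k, ν j k l)

lemma split_sum {n : ℕ} (lo hi : Fin n → ℝ) (h : ∀ i, lo i ≤ hi i) (c : ℝ)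
    (h1 : ∑ i, lo i ≤ c) (h2 : c ≤ ∑ i, hi i) :
    ∃ t : Fin n → ℝ, (∀ i, lo i ≤ t i) ∧ (∀ i, t i ≤ hi i) ∧ ∑ i, t i = c := by
  by_cases hd : ∑ i, hi i = ∑ i, lo i
  · exact ⟨lo, fun i => le_refl _, h, le_antisymm h1 (by rw [← hd]; exact h2)⟩
  · have hpos : 0 < ∑ i, hi i - ∑ i, lo i := by
      have hle : ∑ i, lo i ≤ ∑ i, hi i := Finset.sum_le_sum (fun i _ => h i)
      rcases lt_or_eq_of_le hle with h' | h'
      · linarith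
      · exact absurd h'.symm hd
    set lam := (c - ∑ i, lo i) / (∑ i, hi i - ∑ i, lo i) with hlam
    have hlam0 : 0 ≤ lam := div_nonneg (by linarith) hpos.le
    have hlam1 : lam ≤ 1 := by rw [hlam, div_le_one hpos]; linarith
    refine ⟨fun i => lo i + lam * (hi i - lo i), ?_, ?_, ?_⟩
    · intro i; show lo i ≤ lo i + lam * (hi i - lo i); nlinarith [h i]
    · intro i; show lo i + lam * (hi i - lo i) ≤ hi i; nlinarith [h i]
    · have : ∑ i, (lo i + lam * (hi i - lo i)) = ∑ i, lo i + lam * (∑ i, hi i - ∑ i, lo i) := by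
        rw [Finset.sum_add_distrib, ← Finset.mul_sum, Finset.sum_sub_distrib]
      rw [this, hlam]
      field_simp
      ring

lemma sum_fin2 (g : Fin 2 → ℝ) (k : Fin 2) : ∑ x, g x = g k + g (k + 1) := by
  fin_cases k <;> simp [Fin.sum_univ_two] <;> ring_nf

lemma fin2_eq_or (k k' : Fin 2) : k = k' ∨ k = k' + 1 := by
  fin_cases k <;> fin_cases k' <;> simp

lemma fin2_em (k : Fin 2) : k = 0 ∨ k = 1 := by
  fin_cases k
  · left; rfl
  · right; rfl

lemma fin2_succ_ne (k : Fin 2) : k + 1 ≠ k := by fin_cases k <;> simp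

lemma min_shift {a a' b b' m : ℝ} (hs : a + a' = b + b') (hm : m = min a b) :
    min a' b' = a' - b + m := by
  rcases le_total a b with h | h
  · rw [min_eq_left h] at hm
    rw [min_eq_right (by linarith)]
    linarith
  · rw [min_eq_right h] at hm
    rw [min_eq_left (by linarith)]
    linarith

lemma glue_gap2 (r : ℕ) (p12 : Fin r → Fin 2 → ℝ) (p23 p34 : Fin 2 → Fin 2 → ℝ)
    (p14 : Fin r → Fin 2 → ℝ)
    (hprob : ProbChain r p12 p23 p34 p14) (hcons : ConsChain r p12 p23 p34 p14)
    (hgap : ∑ i, min (p12 i 0) (p14 i 0) < ∑ k, max (p34 k 0 - p23 1 k) 0) :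
    ∃ T ν, IsGlue r p12 p23 p34 p14 T ν ∧ ∃ k,
      ∑ j, ∑ l, ∑ i, T i j l
        = 1 - 2 * (p34 k 0 - p23 1 k - ∑ i, min (p12 i 0) (p14 i 0)) := by
  obtain ⟨h12, h23, h34, h14, hs12, hs23, hs34, hs14⟩ := hprob
  obtain ⟨hc1, hc2, hc3, hc4⟩ := hcons
  set M0 := ∑ i, min (p12 i 0) (p14 i 0) with hM0
  -- basic facts
  have hsi : ∀ i, p12 i 0 + p12 i 1 = p14 i 0 + p14 i 1 := by
    intro i; have := hc1 i; simpa [Fin.sum_univ_two] using this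
  have hA0 : ∑ i, p12 i 0 = p23 0 0 + p23 0 1 := by
    have := hc2 0; simpa [Fin.sum_univ_two] using this
  have hmu21 : ∑ i, p12 i 1 = p23 1 0 + p23 1 1 := by
    have := hc2 1; simpa [Fin.sum_univ_two] using this
  have hmu3 : ∀ k, p23 0 k + p23 1 k = p34 k 0 + p34 k 1 := by
    intro k; have := hc3 k; simpa [Fin.sum_univ_two] using this
  have hmu40 : p34 0 0 + p34 1 0 = ∑ i, p14 i 0 := by
    have := hc4 0; simpa [Fin.sum_univ_two] using this
  have htot : ∑ i, (p12 i 0 + p12 i 1) = 1 := by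
    rw [← hs12]; exact Finset.sum_congr rfl (fun i _ => by simp [Fin.sum_univ_two])
  have hM0nn : 0 ≤ M0 :=
    Finset.sum_nonneg (fun i _ => le_min (h12 i 0) (h14 i 0))
  have hM0ge : ∑ i, p14 i 0 - ∑ i, p12 i 1 ≤ M0 := by
    have : ∀ i ∈ Finset.univ, p14 i 0 - p12 i 1 ≤ min (p12 i 0) (p14 i 0) := by
      intro i _
      refine le_min (by linarith [hsi i, h14 i 1]) (by linarith [h12 i 1])
    calc ∑ i, p14 i 0 - ∑ i, p12 i 1 = ∑ i, (p14 i 0 - p12 i 1) := by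
          rw [Finset.sum_sub_distrib]
      _ ≤ M0 := Finset.sum_le_sum this
  -- find the violating k̂
  have e10 : ((1:Fin 2)+1) = 0 := rfl
  have e01 : ((0:Fin 2)+1) = 1 := rfl
  have hex : ∃ kh : Fin 2, 0 < p34 kh 0 - p23 1 kh - M0 ∧
      p34 (kh+1) 0 - p23 1 (kh+1) ≤ p34 kh 0 - p23 1 kh - M0 := by
    rw [Fin.sum_univ_two] at hgap
    have hboth : ∑ i, p14 i 0 - ∑ i, p12 i 1 ≤ M0 := hM0ge
    rcases le_or_gt (p34 0 0 - p23 1 0) 0 with h0 | h0 <;>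
      rcases le_or_gt (p34 1 0 - p23 1 1) 0 with h1 | h1
    · rw [max_eq_right h0, max_eq_right h1] at hgap; linarith
    · rw [max_eq_right h0, max_eq_left h1.le] at hgap
      exact ⟨1, by linarith, by rw [e10]; linarith⟩
    · rw [max_eq_left h0.le, max_eq_right h1] at hgap
      exact ⟨0, by linarith, by rw [e01]; linarith⟩
    · exfalso
      rw [max_eq_left h0.le, max_eq_left h1.le] at hgap
      rw [← hmu40, hmu21] at hboth
      linarith
  obtain ⟨kh, hδpos, hother⟩ := hex
  set δ := p34 kh 0 - p23 1 kh - M0 with hδ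
  -- symbolic sums at kh
  have hA0k : ∑ i, p12 i 0 = p23 0 kh + p23 0 (kh+1) := by
    rw [hA0]; have := sum_fin2 (fun k => p23 0 k) kh
    rw [Fin.sum_univ_two] at this; linarith [this]
  have hmu21k : ∑ i, p12 i 1 = p23 1 kh + p23 1 (kh+1) := by
    rw [hmu21]; have := sum_fin2 (fun k => p23 1 k) kh
    rw [Fin.sum_univ_two] at this; linarith [this]
  have hmu40k : p34 kh 0 + p34 (kh+1) 0 = ∑ i, p14 i 0 := by
    rw [← hmu40]; have := sum_fin2 (fun k => p34 k 0) kh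
    rw [Fin.sum_univ_two] at this; linarith [this]
  -- budgets reachable
  have hδA : δ ≤ ∑ i, (p12 i 0 - min (p12 i 0) (p14 i 0)) := by
    rw [Finset.sum_sub_distrib, hA0k]
    have h1 : p34 kh 0 - p23 1 kh ≤ p23 0 kh := by linarith [hmu3 kh, h34 kh 1]
    have h2 : 0 ≤ p23 0 (kh+1) := h23 0 (kh+1)
    rw [hδ]; linarith
  have hδB : δ ≤ ∑ i, (p14 i 0 - min (p12 i 0) (p14 i 0)) := by
    rw [Finset.sum_sub_distrib, ← hmu40k]
    have h2 : 0 ≤ p34 (kh+1) 0 := h34 (kh+1) 0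
    have h3 : 0 ≤ p23 1 kh := h23 1 kh
    rw [hδ]; linarith
  obtain ⟨u, hu0, huα, husum⟩ := split_sum (fun _ => 0)
    (fun i => p12 i 0 - min (p12 i 0) (p14 i 0))
    (fun i => by simp [sub_nonneg, min_le_left]) δ (by simp [hδpos.le]) hδA
  obtain ⟨v, hv0, hvβ, hvsum⟩ := split_sum (fun _ => 0)
    (fun i => p14 i 0 - min (p12 i 0) (p14 i 0))
    (fun i => by simp [sub_nonneg, min_le_right]) δ (by simp [hδpos.le]) hδB
  -- the glued measures
  set Z := ∑ i, p12 i 1 - ∑ i, p14 i 0 + M0 with hZ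
  have hm1 : ∀ i : Fin r, min (p12 i 1) (p14 i 1)
      = p12 i 1 - p14 i 0 + min (p12 i 0) (p14 i 0) :=
    fun i => min_shift (hsi i) rfl
  have hsum11 : ∑ i, min (p12 i 1) (p14 i 1) = ∑ i, p12 i 1 - ∑ i, p14 i 0 + M0 := by
    have h' : ∑ i, (p12 i 1 - p14 i 0 + min (p12 i 0) (p14 i 0))
        = ∑ i, p12 i 1 - ∑ i, p14 i 0 + M0 := by
      rw [Finset.sum_add_distrib, Finset.sum_sub_distrib, hM0]
    rw [← h']
    exact Finset.sum_congr rfl (fun i _ => hm1 i)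
  have hne : (kh+1) ≠ kh := fin2_succ_ne kh
  refine ⟨fun i => ![![min (p12 i 0) (p14 i 0), p12 i 0 - min (p12 i 0) (p14 i 0) - u i],
                    ![p14 i 0 - min (p12 i 0) (p14 i 0) - v i, min (p12 i 1) (p14 i 1)]],
          fun j k l => if k = kh then
             ![![M0, p23 0 kh - (p34 kh 0 - p23 1 kh)], ![p23 1 kh, 0]] j l
           else
             ![![0, p23 0 k], ![p34 k 0, Z]] j l, ?_, ?_⟩
  refine ⟨?_, ?_, ?_, ?_, ?_, ?_, ?_⟩
  · intro i j l
    fin_cases j <;> fin_cases l <;> simp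
    · exact ⟨h12 i 0, h14 i 0⟩
    · linarith [huα i]
    · linarith [hvβ i]
    · exact ⟨h12 i 1, h14 i 1⟩
  · intro j k l
    rcases fin2_eq_or k kh with rfl | rfl
    · fin_cases j <;> fin_cases l <;> simp
      · exact hM0nn
      · linarith [hmu3 k, h34 k 1]
      · exact h23 1 k
    · fin_cases j <;> fin_cases l <;> simp [if_neg hne]
      · exact h23 0 (kh+1)
      · exact h34 (kh+1) 0
      · linarith
  · intro i j
    fin_cases j <;> simp [Fin.sum_univ_two]
    · linarith [hu0 i]
    · rw [hm1 i]; linarith [hv0 i]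
  · intro i l
    fin_cases l <;> simp [Fin.sum_univ_two]
    · linarith [hv0 i]
    · rw [hm1 i]; linarith [hu0 i, hsi i]
  · intro j k
    rcases fin2_eq_or k kh with rfl | rfl
    · fin_cases j <;> simp [Fin.sum_univ_two]
      · linarith [hδpos]
    · fin_cases j <;> simp [Fin.sum_univ_two, if_neg hne]
      · linarith [hmu21k, hmu40k, hδpos]
  · intro k l
    rcases fin2_eq_or k kh with rfl | rfl
    · fin_cases l <;> simp [Fin.sum_univ_two]
      · linarith [hδpos]
      · linarith [hmu3 k]
    · fin_cases l <;> simp [Fin.sum_univ_two, if_neg hne]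
      · linarith [hmu21k, hmu40k, hmu3 (kh+1), hδpos]
  · intro j l
    have hne' : kh + 1 ≠ kh := fin2_succ_ne kh
    rw [sum_fin2 _ kh]
    fin_cases j <;> fin_cases l <;> simp [hne']
    · exact hM0.symm
    · rw [husum, ← hM0]; linarith [hA0k]
    · rw [hvsum, ← hM0]; linarith [hmu40k]
    · exact hsum11
  · refine ⟨kh, ?_⟩
    simp only [Fin.sum_univ_two, Matrix.cons_val_zero, Matrix.cons_val_one, Matrix.head_cons]
    have e1 : ∑ i, (p12 i 0 - p12 i 0 ⊓ p14 i 0 - u i)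
        = ∑ i, p12 i 0 - M0 - (p34 kh 0 - p23 1 kh - M0) := by
      rw [Finset.sum_sub_distrib, Finset.sum_sub_distrib, husum, ← hM0]
    have e2 : ∑ i, (p14 i 0 - p12 i 0 ⊓ p14 i 0 - v i)
        = ∑ i, p14 i 0 - M0 - (p34 kh 0 - p23 1 kh - M0) := by
      rw [Finset.sum_sub_distrib, Finset.sum_sub_distrib, hvsum, ← hM0]
    have h1 : ∑ i, p12 i 0 + ∑ i, p12 i 1 = 1 := by
      rw [← Finset.sum_add_distrib]; exact htot
    linarith [hsum11, e1, e2, hM0, h1]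

lemma fin2_swap_sum (g : Fin 2 → ℝ) : ∑ l, g (l + 1) = ∑ l, g l := by
  have e01 : (0:Fin 2)+1 = 1 := rfl
  have e10 : (1:Fin 2)+1 = 0 := rfl
  rw [Fin.sum_univ_two, Fin.sum_univ_two, e01, e10]; ring

lemma fin2_pp (l : Fin 2) : l + 1 + 1 = l := by fin_cases l <;> rfl

lemma exists_glue (r : ℕ) (p12 : Fin r → Fin 2 → ℝ) (p23 p34 : Fin 2 → Fin 2 → ℝ)
    (p14 : Fin r → Fin 2 → ℝ)
    (hprob : ProbChain r p12 p23 p34 p14) (hcons : ConsChain r p12 p23 p34 p14) :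
    ∃ T ν, IsGlue r p12 p23 p34 p14 T ν ∧
      1 - 2 * max (max
          (max (p34 0 0 - p23 1 0 - ∑ i, min (p12 i 0) (p14 i 0))
               (p34 0 1 - p23 1 0 - ∑ i, min (p12 i 0) (p14 i 1)))
          (max (p34 1 0 - p23 1 1 - ∑ i, min (p12 i 0) (p14 i 0))
               (p34 1 1 - p23 1 1 - ∑ i, min (p12 i 0) (p14 i 1)))) 0
        ≤ ∑ j, ∑ l, ∑ i, T i j l := by
  by_cases hA : ∑ i, min (p12 i 0) (p14 i 0) < ∑ k, max (p34 k 0 - p23 1 k) 0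
  · obtain ⟨T, ν, hglue, k, hmass⟩ := glue_gap2 r p12 p23 p34 p14 hprob hcons hA
    refine ⟨T, ν, hglue, ?_⟩
    rw [hmass]
    have : p34 k 0 - p23 1 k - ∑ i, min (p12 i 0) (p14 i 0) ≤ max (max
          (max (p34 0 0 - p23 1 0 - ∑ i, min (p12 i 0) (p14 i 0))
               (p34 0 1 - p23 1 0 - ∑ i, min (p12 i 0) (p14 i 1)))
          (max (p34 1 0 - p23 1 1 - ∑ i, min (p12 i 0) (p14 i 0))
               (p34 1 1 - p23 1 1 - ∑ i, min (p12 i 0) (p14 i 1)))) 0 := by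
      fin_cases k
      · exact le_max_of_le_left (le_max_of_le_left (le_max_left _ _))
      · exact le_max_of_le_left (le_max_of_le_right (le_max_left _ _))
    linarith
  by_cases hB : ∑ i, min (p12 i 0) (p14 i 1) < ∑ k, max (p34 k 1 - p23 1 k) 0
  · -- relabel l ↦ l + 1 and use glue_gap2
    obtain ⟨h12, h23, h34, h14, hs12, hs23, hs34, hs14⟩ := hprob
    obtain ⟨hc1, hc2, hc3, hc4⟩ := hcons
    have e01 : (0:Fin 2)+1 = 1 := rfl
    have e10 : (1:Fin 2)+1 = 0 := rfl
    have hprob' : ProbChain r p12 p23 (fun k l => p34 k (l+1)) (fun i l => p14 i (l+1)) := by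
      refine ⟨h12, h23, fun k l => h34 k (l+1), fun i l => h14 i (l+1), hs12, hs23, ?_, ?_⟩
      · rw [← hs34]
        exact Finset.sum_congr rfl (fun k _ => fin2_swap_sum (fun l => p34 k l))
      · rw [← hs14]
        exact Finset.sum_congr rfl (fun i _ => fin2_swap_sum (fun l => p14 i l))
    have hcons' : ConsChain r p12 p23 (fun k l => p34 k (l+1)) (fun i l => p14 i (l+1)) := by
      refine ⟨fun i => ?_, hc2, fun k => ?_, fun l => ?_⟩
      · rw [hc1 i]; exact (fin2_swap_sum (fun l => p14 i l)).symm
      · rw [hc3 k]; exact (fin2_swap_sum (fun l => p34 k l)).symm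
      · exact hc4 (l+1)
    have hA' : ∑ i, min (p12 i 0) ((fun i l => p14 i (l+1)) i 0)
        < ∑ k, max ((fun k l => p34 k (l+1)) k 0 - p23 1 k) 0 := by
      simp only [e01]; exact hB
    obtain ⟨T', ν', hglue', k, hmass'⟩ :=
      glue_gap2 r p12 p23 _ _ hprob' hcons' hA'
    obtain ⟨hT0, hν0, hT12, hT14, hν23, hν34, hm⟩ := hglue'
    refine ⟨fun i j l => T' i j (l+1), fun j k l => ν' j k (l+1),
      ⟨fun i j l => hT0 i j (l+1), fun j k l => hν0 j k (l+1), ?_, ?_, ?_, ?_, ?_⟩, ?_⟩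
    · intro i j; rw [fin2_swap_sum (fun l => T' i j l)]; exact hT12 i j
    · intro i l
      have := hT14 i (l+1)
      simpa [fin2_pp l] using this
    · intro j k; rw [fin2_swap_sum (fun l => ν' j k l)]; exact hν23 j k
    · intro k l
      have := hν34 k (l+1)
      simpa [fin2_pp l] using this
    · intro j l; exact hm j (l+1)
    · have hmm : ∑ j, ∑ l, ∑ i, T' i j (l+1) = ∑ j, ∑ l, ∑ i, T' i j l := by
        exact Finset.sum_congr rfl (fun j _ => fin2_swap_sum (fun l => ∑ i, T' i j l))
      rw [hmm, hmass']
      have : p34 k (0+1) - p23 1 k - ∑ i, min (p12 i 0) (p14 i (0+1)) ≤ max (max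
          (max (p34 0 0 - p23 1 0 - ∑ i, min (p12 i 0) (p14 i 0))
               (p34 0 1 - p23 1 0 - ∑ i, min (p12 i 0) (p14 i 1)))
          (max (p34 1 0 - p23 1 1 - ∑ i, min (p12 i 0) (p14 i 0))
               (p34 1 1 - p23 1 1 - ∑ i, min (p12 i 0) (p14 i 1)))) 0 := by
        rw [e01]
        fin_cases k
        · exact le_max_of_le_left (le_max_of_le_left (le_max_right _ _))
        · exact le_max_of_le_left (le_max_of_le_right (le_max_right _ _))
      linarith
  · -- both intervals overlap
    push_neg at hA hB
    obtain ⟨h12, h23, h34, h14, hs12, hs23, hs34, hs14⟩ := hprob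
    obtain ⟨hc1, hc2, hc3, hc4⟩ := hcons
    have hsi : ∀ i, p12 i 0 + p12 i 1 = p14 i 0 + p14 i 1 := by
      intro i; have := hc1 i; simpa [Fin.sum_univ_two] using this
    have hmu3 : ∀ k, p23 0 k + p23 1 k = p34 k 0 + p34 k 1 := by
      intro k; have := hc3 k; simpa [Fin.sum_univ_two] using this
    have hA0 : ∑ i, p12 i 0 = p23 0 0 + p23 0 1 := by
      have := hc2 0; simpa [Fin.sum_univ_two] using this
    have hA1 : ∑ i, p12 i 1 = p23 1 0 + p23 1 1 := by
      have := hc2 1; simpa [Fin.sum_univ_two] using this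
    have hB0 : p34 0 0 + p34 1 0 = ∑ i, p14 i 0 := by
      have := hc4 0; simpa [Fin.sum_univ_two] using this
    have htot : ∑ i, (p12 i 0 + p12 i 1) = 1 := by
      rw [← hs12]; exact Finset.sum_congr rfl (fun i _ => by simp [Fin.sum_univ_two])
    -- L_A ≤ H_B from hB
    have idA : ∀ i, min (p12 i 0) (p14 i 1) = p12 i 0 - max (p12 i 0 - p14 i 1) 0 := by
      intro i
      rcases le_total (p12 i 0) (p14 i 1) with h | h
      · rw [min_eq_left h, max_eq_right (by linarith)]; ring
      · rw [min_eq_right h, max_eq_left (by linarith)]; ring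
    have idB : ∀ k, max (p34 k 1 - p23 1 k) 0 = p23 0 k - min (p23 0 k) (p34 k 0) := by
      intro k
      rcases le_total (p23 0 k) (p34 k 0) with h | h
      · rw [min_eq_left h, max_eq_right (by linarith [hmu3 k])]; linarith [hmu3 k]
      · rw [min_eq_right h, max_eq_left (by linarith [hmu3 k])]; linarith [hmu3 k]
    have hLAHB : ∑ i, max (p12 i 0 - p14 i 1) 0 ≤ ∑ k, min (p23 0 k) (p34 k 0) := by
      have e1 : ∑ k, max (p34 k 1 - p23 1 k) 0
          = ∑ k, p23 0 k - ∑ k, min (p23 0 k) (p34 k 0) := by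
        rw [← Finset.sum_sub_distrib]; exact Finset.sum_congr rfl (fun k _ => idB k)
      have e2 : ∑ i, min (p12 i 0) (p14 i 1)
          = ∑ i, p12 i 0 - ∑ i, max (p12 i 0 - p14 i 1) 0 := by
        rw [← Finset.sum_sub_distrib]; exact Finset.sum_congr rfl (fun i _ => idA i)
      have e3 : ∑ i, p12 i 0 = ∑ k, p23 0 k := by rw [hA0, Fin.sum_univ_two]
      rw [e1, e2] at hB
      linarith
    have hlohi : ∀ i, max (p12 i 0 - p14 i 1) 0 ≤ min (p12 i 0) (p14 i 0) := by
      intro i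
      exact max_le (le_min (by linarith [h14 i 1])
          (by linarith [hsi i, h12 i 1])) (le_min (h12 i 0) (h14 i 0))
    have hlohiB : ∀ k, max (p34 k 0 - p23 1 k) 0 ≤ min (p23 0 k) (p34 k 0) := by
      intro k
      exact max_le (le_min (by linarith [hmu3 k, h34 k 1]) (by linarith [h23 1 k]))
        (le_min (h23 0 k) (h34 k 0))
    set c := max (∑ i, max (p12 i 0 - p14 i 1) 0) (∑ k, max (p34 k 0 - p23 1 k) 0) with hc
    obtain ⟨t, ht1, ht2, htsum⟩ := split_sum (fun i => max (p12 i 0 - p14 i 1) 0)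
      (fun i => min (p12 i 0) (p14 i 0)) hlohi c (le_max_left _ _)
      (le_trans (max_le (Finset.sum_le_sum (fun i _ => hlohi i)) hA) (le_refl _))
    obtain ⟨w, hw1, hw2, hwsum⟩ := split_sum (fun k => max (p34 k 0 - p23 1 k) 0)
      (fun k => min (p23 0 k) (p34 k 0)) hlohiB c
      (le_max_right _ _)
      (max_le hLAHB (Finset.sum_le_sum (fun k _ => hlohiB k)))
    refine ⟨fun i j l => ![![t i, p12 i 0 - t i],
                           ![p14 i 0 - t i, p12 i 1 - p14 i 0 + t i]] j l,
            fun j k l => ![![w k, p23 0 k - w k],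
                           ![p34 k 0 - w k, p23 1 k - p34 k 0 + w k]] j l,
            ⟨?_, ?_, ?_, ?_, ?_, ?_, ?_⟩, ?_⟩
    · intro i j l
      have h1 := ht1 i; have h2 := ht2 i
      fin_cases j <;> fin_cases l <;> simp
      · linarith [le_max_right (p12 i 0 - p14 i 1) (0:ℝ)]
      · linarith [min_le_left (p12 i 0) (p14 i 0)]
      · linarith [min_le_right (p12 i 0) (p14 i 0)]
      · linarith [le_max_left (p12 i 0 - p14 i 1) (0:ℝ), hsi i]
    · intro j k l
      have h1 := hw1 k; have h2 := hw2 k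
      fin_cases j <;> fin_cases l <;> simp
      · linarith [le_max_right (p34 k 0 - p23 1 k) (0:ℝ)]
      · linarith [min_le_left (p23 0 k) (p34 k 0)]
      · linarith [min_le_right (p23 0 k) (p34 k 0)]
      · linarith [le_max_left (p34 k 0 - p23 1 k) (0:ℝ), hmu3 k]
    · intro i j
      fin_cases j <;> simp [Fin.sum_univ_two]
    · intro i l
      fin_cases l <;> simp [Fin.sum_univ_two]
      · linarith [hsi i]
    · intro j k
      fin_cases j <;> simp [Fin.sum_univ_two]
    · intro k l
      fin_cases l <;> simp [Fin.sum_univ_two]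
      · linarith [hmu3 k]
    · intro j l
      have hwsum2 : w 0 + w 1 = c := by rw [← hwsum, Fin.sum_univ_two]
      have e1 : ∑ i, (p12 i 0 - t i) = ∑ i, p12 i 0 - ∑ i, t i := Finset.sum_sub_distrib _ _
      have e2 : ∑ i, (p14 i 0 - t i) = ∑ i, p14 i 0 - ∑ i, t i := Finset.sum_sub_distrib _ _
      have e3 : ∑ i, (p12 i 1 - p14 i 0 + t i)
          = ∑ i, p12 i 1 - ∑ i, p14 i 0 + ∑ i, t i := by
        rw [Finset.sum_add_distrib, Finset.sum_sub_distrib]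
      fin_cases j <;> fin_cases l <;> simp [Fin.sum_univ_two] <;>
        linarith [htsum, hwsum2, hA0, hA1, hB0, e1, e2, e3]
    · simp only [Fin.sum_univ_two, Matrix.cons_val_zero, Matrix.cons_val_one, Matrix.head_cons]
      have e1 : ∑ i, (p12 i 0 - t i) = ∑ i, p12 i 0 - ∑ i, t i := Finset.sum_sub_distrib _ _
      have e2 : ∑ i, (p14 i 0 - t i) = ∑ i, p14 i 0 - ∑ i, t i := Finset.sum_sub_distrib _ _
      have e3 : ∑ i, (p12 i 1 - p14 i 0 + t i)
          = ∑ i, p12 i 1 - ∑ i, p14 i 0 + ∑ i, t i := by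
        rw [Finset.sum_add_distrib, Finset.sum_sub_distrib]
      have e4 : ∑ i, p12 i 0 + ∑ i, p12 i 1 = 1 := by
        rw [← Finset.sum_add_distrib]; exact htot
      have hm0 : (0:ℝ) ≤ max (max
          (max (p34 0 0 - p23 1 0 - ∑ i, min (p12 i 0) (p14 i 0))
               (p34 0 1 - p23 1 0 - ∑ i, min (p12 i 0) (p14 i 1)))
          (max (p34 1 0 - p23 1 1 - ∑ i, min (p12 i 0) (p14 i 0))
               (p34 1 1 - p23 1 1 - ∑ i, min (p12 i 0) (p14 i 1)))) 0 :=
        le_max_right _ _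
      linarith [e1, e2, e3, e4]

lemma swap3 {α β γ : Type*} [Fintype α] [Fintype β] [Fintype γ] (g : α → β → γ → ℝ) :
    ∑ a, ∑ b, ∑ c, g a b c = ∑ b, ∑ c, ∑ a, g a b c := by
  rw [Finset.sum_comm]
  exact Finset.sum_congr rfl (fun b _ => Finset.sum_comm)

lemma repl {α β : Type*} [Fintype α] [Fintype β] (f p q : α → β → ℝ)
    (hf : ∀ a b, -1 ≤ f a b) (hle : ∀ a b, q a b ≤ p a b) :
    ∑ a, ∑ b, f a b * q a b - (∑ a, ∑ b, p a b - ∑ a, ∑ b, q a b)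
      ≤ ∑ a, ∑ b, f a b * p a b := by
  have key : ∑ a, ∑ b, (f a b * q a b - p a b + q a b) ≤ ∑ a, ∑ b, f a b * p a b :=
    Finset.sum_le_sum (fun a _ => Finset.sum_le_sum (fun b _ => by nlinarith [hf a b, hle a b]))
  have expand : ∑ a, ∑ b, (f a b * q a b - p a b + q a b)
      = ∑ a, ∑ b, f a b * q a b - ∑ a, ∑ b, p a b + ∑ a, ∑ b, q a b := by
    simp [Finset.sum_add_distrib, Finset.sum_sub_distrib]
  linarith

lemma upper_bound (r : ℕ) (hr : 0 < r) (p12 : Fin r → Fin 2 → ℝ)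
    (p23 p34 : Fin 2 → Fin 2 → ℝ) (p14 : Fin r → Fin 2 → ℝ)
    (hprob : ProbChain r p12 p23 p34 p14) (hcons : ConsChain r p12 p23 p34 p14)
    (f12 : Fin r → Fin 2 → ℝ) (f23 f34 : Fin 2 → Fin 2 → ℝ) (f14 : Fin r → Fin 2 → ℝ)
    (hb12 : ∀ i j, -1 ≤ f12 i j) (hb23 : ∀ j k, -1 ≤ f23 j k)
    (hb34 : ∀ k l, -1 ≤ f34 k l) (hb14 : ∀ i l, -1 ≤ f14 i l)
    (hfeas : ∀ i j k l, 0 ≤ f12 i j + f23 j k + f34 k l + f14 i l) :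
    -(1/4) * ((∑ i, ∑ j, f12 i j * p12 i j) + (∑ j, ∑ k, f23 j k * p23 j k) +
        (∑ k, ∑ l, f34 k l * p34 k l) + (∑ i, ∑ l, f14 i l * p14 i l))
      ≤ 2 * max (max
          (max (p34 0 0 - p23 1 0 - ∑ i, min (p12 i 0) (p14 i 0))
               (p34 0 1 - p23 1 0 - ∑ i, min (p12 i 0) (p14 i 1)))
          (max (p34 1 0 - p23 1 1 - ∑ i, min (p12 i 0) (p14 i 0))
               (p34 1 1 - p23 1 1 - ∑ i, min (p12 i 0) (p14 i 1)))) 0 := by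
  obtain ⟨T, ν, ⟨hT0, hν0, hT12, hT14, hν23, hν34, hmarg⟩, hmass⟩ :=
    exists_glue r p12 p23 p34 p14 hprob hcons
  obtain ⟨h12, h23, h34, h14, hs12, hs23, hs34, hs14⟩ := hprob
  set mass := ∑ j, ∑ l, ∑ i, T i j l with hmassdef
  -- conversions of masses
  have hm12 : ∑ i, ∑ j, ∑ l, T i j l = mass := swap3 (fun i j l => T i j l)
  have hm14 : ∑ i, ∑ l, ∑ j, T i j l = mass := by
    rw [swap3 (fun i l j => T i j l), Finset.sum_comm]
  have hm23 : ∑ j, ∑ k, ∑ l, ν j k l = mass := by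
    rw [hmassdef]
    refine Finset.sum_congr rfl (fun j _ => ?_)
    rw [Finset.sum_comm]
    exact Finset.sum_congr rfl (fun l _ => (hmarg j l).symm)
  have hm34 : ∑ k, ∑ l, ∑ j, ν j k l = mass := by
    rw [swap3 (fun k l j => ν j k l), Finset.sum_comm, hmassdef]
    refine Finset.sum_congr rfl (fun j _ => Finset.sum_congr rfl (fun l _ => (hmarg j l).symm))
  -- conversions of pairings
  have hc12 : ∑ i, ∑ j, f12 i j * (∑ l, T i j l) = ∑ j, ∑ l, ∑ i, T i j l * f12 i j := by
    rw [← swap3 (fun i j l => T i j l * f12 i j)]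
    exact Finset.sum_congr rfl (fun i _ => Finset.sum_congr rfl (fun j _ => by
      rw [Finset.mul_sum]
      exact Finset.sum_congr rfl (fun l _ => mul_comm _ _)))
  have hc14 : ∑ i, ∑ l, f14 i l * (∑ j, T i j l) = ∑ j, ∑ l, ∑ i, T i j l * f14 i l := by
    have e : ∑ i, ∑ l, f14 i l * (∑ j, T i j l) = ∑ i, ∑ l, ∑ j, T i j l * f14 i l :=
      Finset.sum_congr rfl (fun i _ => Finset.sum_congr rfl (fun l _ => by
        rw [Finset.mul_sum]; exact Finset.sum_congr rfl (fun j _ => mul_comm _ _)))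
    rw [e, swap3 (fun i l j => T i j l * f14 i l), Finset.sum_comm]
  have hc23 : ∑ j, ∑ k, f23 j k * (∑ l, ν j k l) = ∑ j, ∑ l, ∑ k, ν j k l * f23 j k := by
    refine Finset.sum_congr rfl (fun j _ => ?_)
    have e : (∑ k, f23 j k * (∑ l, ν j k l)) = ∑ k, ∑ l, ν j k l * f23 j k :=
      Finset.sum_congr rfl (fun k _ => by
        rw [Finset.mul_sum]; exact Finset.sum_congr rfl (fun l _ => mul_comm _ _))
    rw [e]; exact Finset.sum_comm
  have hc34 : ∑ k, ∑ l, f34 k l * (∑ j, ν j k l) = ∑ j, ∑ l, ∑ k, ν j k l * f34 k l := by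
    have e : ∑ k, ∑ l, f34 k l * (∑ j, ν j k l) = ∑ k, ∑ l, ∑ j, ν j k l * f34 k l :=
      Finset.sum_congr rfl (fun k _ => Finset.sum_congr rfl (fun l _ => by
        rw [Finset.mul_sum]; exact Finset.sum_congr rfl (fun j _ => mul_comm _ _)))
    rw [e, swap3 (fun k l j => ν j k l * f34 k l), Finset.sum_comm]
  -- pointwise nonnegativity over (j, l)
  have hjl : ∀ j l : Fin 2, 0 ≤ ∑ i, T i j l * (f12 i j + f14 i l)
      + ∑ k, ν j k l * (f23 j k + f34 k l) := by
    intro j l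
    obtain ⟨i0, -, hi0⟩ := Finset.exists_min_image Finset.univ
      (fun i => f12 i j + f14 i l) ⟨⟨0, hr⟩, Finset.mem_univ _⟩
    obtain ⟨k0, -, hk0⟩ := Finset.exists_min_image Finset.univ
      (fun k => f23 j k + f34 k l) ⟨0, Finset.mem_univ _⟩
    have h1 : (∑ i, T i j l) * (f12 i0 j + f14 i0 l) ≤ ∑ i, T i j l * (f12 i j + f14 i l) := by
      rw [Finset.sum_mul]
      exact Finset.sum_le_sum (fun i _ =>
        mul_le_mul_of_nonneg_left (hi0 i (Finset.mem_univ i)) (hT0 i j l))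
    have h2 : (∑ k, ν j k l) * (f23 j k0 + f34 k0 l) ≤ ∑ k, ν j k l * (f23 j k + f34 k l) := by
      rw [Finset.sum_mul]
      exact Finset.sum_le_sum (fun k _ =>
        mul_le_mul_of_nonneg_left (hk0 k (Finset.mem_univ k)) (hν0 j k l))
    have hqν : ∑ k, ν j k l = ∑ i, T i j l := (hmarg j l).symm
    rw [hqν] at h2
    have hq : (0:ℝ) ≤ ∑ i, T i j l := Finset.sum_nonneg (fun i _ => hT0 i j l)
    have hfeas0 : 0 ≤ (f12 i0 j + f14 i0 l) + (f23 j k0 + f34 k0 l) := by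
      have := hfeas i0 j k0 l; linarith
    have e := mul_add (∑ i, T i j l) (f12 i0 j + f14 i0 l) (f23 j k0 + f34 k0 l)
    have hmn := mul_nonneg hq hfeas0
    linarith
  have hsum0 : 0 ≤ (∑ j, ∑ l, ∑ i, T i j l * f12 i j) + (∑ j, ∑ l, ∑ i, T i j l * f14 i l)
      + ((∑ j, ∑ l, ∑ k, ν j k l * f23 j k) + (∑ j, ∑ l, ∑ k, ν j k l * f34 k l)) := by
    have e : ∀ j l : Fin 2, ∑ i, T i j l * (f12 i j + f14 i l)
        + ∑ k, ν j k l * (f23 j k + f34 k l)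
        = ((∑ i, T i j l * f12 i j) + (∑ i, T i j l * f14 i l))
          + ((∑ k, ν j k l * f23 j k) + (∑ k, ν j k l * f34 k l)) := by
      intro j l
      simp [mul_add, Finset.sum_add_distrib]
    have big : 0 ≤ ∑ j, ∑ l : Fin 2,
        (((∑ i, T i j l * f12 i j) + (∑ i, T i j l * f14 i l))
          + ((∑ k, ν j k l * f23 j k) + (∑ k, ν j k l * f34 k l))) :=
      Finset.sum_nonneg (fun j _ => Finset.sum_nonneg (fun l _ => by
        rw [← e j l]; exact hjl j l))
    have expand : ∑ j, ∑ l : Fin 2,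
        (((∑ i, T i j l * f12 i j) + (∑ i, T i j l * f14 i l))
          + ((∑ k, ν j k l * f23 j k) + (∑ k, ν j k l * f34 k l)))
        = (∑ j, ∑ l, ∑ i, T i j l * f12 i j) + (∑ j, ∑ l, ∑ i, T i j l * f14 i l)
          + ((∑ j, ∑ l, ∑ k, ν j k l * f23 j k) + (∑ j, ∑ l, ∑ k, ν j k l * f34 k l)) := by
      simp [Finset.sum_add_distrib]
    linarith [big, expand.symm.le, expand.le]
  have r12 := repl f12 p12 (fun i j => ∑ l, T i j l) hb12 hT12
  have r23 := repl f23 p23 (fun j k => ∑ l, ν j k l) hb23 hν23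
  have r34 := repl f34 p34 (fun k l => ∑ j, ν j k l) hb34 hν34
  have r14 := repl f14 p14 (fun i l => ∑ j, T i j l) hb14 hT14
  rw [hc12, hm12, hs12] at r12
  rw [hc23, hm23, hs23] at r23
  rw [hc34, hm34, hs34] at r34
  rw [hc14, hm14, hs14] at r14
  linarith [r12, r23, r34, r14, hsum0, hmass]

lemma lower_bound (r : ℕ) (p12 : Fin r → Fin 2 → ℝ) (p23 p34 : Fin 2 → Fin 2 → ℝ)
    (p14 : Fin r → Fin 2 → ℝ)
    (hprob : ProbChain r p12 p23 p34 p14) (hcons : ConsChain r p12 p23 p34 p14)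
    (k l : Fin 2) :
    ∃ (f12 : Fin r → Fin 2 → ℝ) (f23 f34 : Fin 2 → Fin 2 → ℝ) (f14 : Fin r → Fin 2 → ℝ),
      (∀ i j, -1 ≤ f12 i j) ∧ (∀ j k, -1 ≤ f23 j k) ∧ (∀ k l, -1 ≤ f34 k l) ∧
      (∀ i l, -1 ≤ f14 i l) ∧
      (∀ i j k l, 0 ≤ f12 i j + f23 j k + f34 k l + f14 i l) ∧
      ((∑ i, ∑ j, f12 i j * p12 i j) + (∑ j, ∑ k', f23 j k' * p23 j k') +
          (∑ k', ∑ l', f34 k' l' * p34 k' l') + (∑ i, ∑ l', f14 i l' * p14 i l'))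
        = -8 * (p34 k l - p23 1 k - ∑ i, min (p12 i 0) (p14 i l)) := by
  obtain ⟨h12, h23, h34, h14, hs12, hs23, hs34, hs14⟩ := hprob
  obtain ⟨hc1, hc2, hc3, hc4⟩ := hcons
  have hlne : l + 1 ≠ l := fin2_succ_ne l
  have hkne : k + 1 ≠ k := fin2_succ_ne k
  have hsi : ∀ i, p12 i 0 + p12 i 1 = p14 i l + p14 i (l+1) := by
    intro i
    have := hc1 i
    rw [Fin.sum_univ_two, sum_fin2 (fun l' => p14 i l') l] at this
    exact this
  have hg1 : p23 0 k + p23 1 k = p34 k l + p34 k (l+1) := by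
    have := hc3 k
    rw [Fin.sum_univ_two, sum_fin2 (fun l' => p34 k l') l] at this
    exact this
  have hg2 : p23 0 (k+1) + p23 1 (k+1) = p34 (k+1) l + p34 (k+1) (l+1) := by
    have := hc3 (k+1)
    rw [Fin.sum_univ_two, sum_fin2 (fun l' => p34 (k+1) l') l] at this
    exact this
  have hg3 : p34 k l + p34 (k+1) l = ∑ i, p14 i l := by
    have := hc4 l
    rw [sum_fin2 (fun k' => p34 k' l) k] at this
    exact this
  have hg5 : ∑ i, p12 i 0 = p23 0 k + p23 0 (k+1) := by
    have := hc2 0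
    rw [sum_fin2 (fun k' => p23 0 k') k] at this
    exact this
  have hg6 : ∑ i, p12 i 1 = p23 1 k + p23 1 (k+1) := by
    have := hc2 1
    rw [sum_fin2 (fun k' => p23 1 k') k] at this
    exact this
  refine ⟨fun i j => if p12 i 0 ≤ p14 i l then (if j = 0 then 3 else -1)
                     else (if j = 1 then 3 else -1),
          fun j k' => if j = 0 then (if k' = k then -1 else 3)
                      else (if k' = k then 3 else -1),
          fun k' l' => if k' = k then (if l' = l then -1 else 3)
                       else (if l' = l then 3 else -1),
          fun i l' => if p12 i 0 ≤ p14 i l then (if l' = l then -1 else 3)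
                      else (if l' = l then 3 else -1), ?_, ?_, ?_, ?_, ?_, ?_⟩
  · intro i j; dsimp only; split_ifs <;> norm_num
  · intro j k'; dsimp only; split_ifs <;> norm_num
  · intro k' l'; dsimp only; split_ifs <;> norm_num
  · intro i l'; dsimp only; split_ifs <;> norm_num
  · intro i j k' l'
    by_cases hi : p12 i 0 ≤ p14 i l <;> fin_cases j <;>
      by_cases hk' : k' = k <;> by_cases hl' : l' = l <;>
      simp [hi, hk', hl'] <;> norm_num
  · dsimp only
    have per_i : ∀ i : Fin r,
        ((if p12 i 0 ≤ p14 i l then (if (0:Fin 2) = 0 then (3:ℝ) else -1)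
          else (if (0:Fin 2) = 1 then 3 else -1)) * p12 i 0 +
         (if p12 i 0 ≤ p14 i l then (if (1:Fin 2) = 0 then (3:ℝ) else -1)
          else (if (1:Fin 2) = 1 then 3 else -1)) * p12 i 1) +
        ((if p12 i 0 ≤ p14 i l then (if l = l then (-1:ℝ) else 3)
          else (if l = l then 3 else -1)) * p14 i l +
         (if p12 i 0 ≤ p14 i l then (if l+1 = l then (-1:ℝ) else 3)
          else (if l+1 = l then 3 else -1)) * p14 i (l+1))
        = 8 * min (p12 i 0) (p14 i l) - 2 * p12 i 0 + 2 * p12 i 1 - 4 * p14 i l := by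
      intro i
      by_cases hi : p12 i 0 ≤ p14 i l
      · rw [min_eq_left hi]; simp [hi, hlne]; linarith [hsi i]
      · rw [min_eq_right (le_of_not_ge hi)]; simp [hi, hlne]; linarith [hsi i]
    have e14 : ∑ i, ∑ l', (if p12 i 0 ≤ p14 i l then (if l' = l then (-1:ℝ) else 3)
          else (if l' = l then 3 else -1)) * p14 i l'
        = ∑ i, ((if p12 i 0 ≤ p14 i l then (if l = l then (-1:ℝ) else 3)
          else (if l = l then 3 else -1)) * p14 i l +
         (if p12 i 0 ≤ p14 i l then (if l+1 = l then (-1:ℝ) else 3)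
          else (if l+1 = l then 3 else -1)) * p14 i (l+1)) :=
      Finset.sum_congr rfl (fun i _ =>
        sum_fin2 (fun l' => (if p12 i 0 ≤ p14 i l then (if l' = l then (-1:ℝ) else 3)
          else (if l' = l then 3 else -1)) * p14 i l') l)
    have e12 : ∑ i, ∑ j, (if p12 i 0 ≤ p14 i l then (if j = 0 then (3:ℝ) else -1)
                     else (if j = 1 then 3 else -1)) * p12 i j
        = ∑ i, ((if p12 i 0 ≤ p14 i l then (if (0:Fin 2) = 0 then (3:ℝ) else -1)
          else (if (0:Fin 2) = 1 then 3 else -1)) * p12 i 0 +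
         (if p12 i 0 ≤ p14 i l then (if (1:Fin 2) = 0 then (3:ℝ) else -1)
          else (if (1:Fin 2) = 1 then 3 else -1)) * p12 i 1) :=
      Finset.sum_congr rfl (fun i _ => Fin.sum_univ_two _)
    have esum : ∑ i, (((if p12 i 0 ≤ p14 i l then (if (0:Fin 2) = 0 then (3:ℝ) else -1)
          else (if (0:Fin 2) = 1 then 3 else -1)) * p12 i 0 +
         (if p12 i 0 ≤ p14 i l then (if (1:Fin 2) = 0 then (3:ℝ) else -1)
          else (if (1:Fin 2) = 1 then 3 else -1)) * p12 i 1) +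
        ((if p12 i 0 ≤ p14 i l then (if l = l then (-1:ℝ) else 3)
          else (if l = l then 3 else -1)) * p14 i l +
         (if p12 i 0 ≤ p14 i l then (if l+1 = l then (-1:ℝ) else 3)
          else (if l+1 = l then 3 else -1)) * p14 i (l+1)))
        = 8 * (∑ i, min (p12 i 0) (p14 i l)) - 2 * ∑ i, p12 i 0
          + 2 * ∑ i, p12 i 1 - 4 * ∑ i, p14 i l := by
      rw [show (8 * (∑ i, min (p12 i 0) (p14 i l)) - 2 * ∑ i, p12 i 0
          + 2 * ∑ i, p12 i 1 - 4 * ∑ i, p14 i l)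
          = ∑ i, (8 * min (p12 i 0) (p14 i l) - 2 * p12 i 0 + 2 * p12 i 1 - 4 * p14 i l) by
        rw [Finset.sum_sub_distrib, Finset.sum_add_distrib, Finset.sum_sub_distrib,
            ← Finset.mul_sum, ← Finset.mul_sum, ← Finset.mul_sum, ← Finset.mul_sum]]
      exact Finset.sum_congr rfl (fun i _ => per_i i)
    have e23 : ∑ j, ∑ k', (if j = 0 then (if k' = k then (-1:ℝ) else 3)
                      else (if k' = k then 3 else -1)) * p23 j k'
        = -p23 0 k + 3 * p23 0 (k+1) + 3 * p23 1 k - p23 1 (k+1) := by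
      rw [Fin.sum_univ_two,
          sum_fin2 (fun k' => (if (0:Fin 2) = 0 then (if k' = k then (-1:ℝ) else 3)
                      else (if k' = k then 3 else -1)) * p23 0 k') k,
          sum_fin2 (fun k' => (if (1:Fin 2) = 0 then (if k' = k then (-1:ℝ) else 3)
                      else (if k' = k then 3 else -1)) * p23 1 k') k]
      simp [hkne]
      ring
    have e34 : ∑ k', ∑ l', (if k' = k then (if l' = l then (-1:ℝ) else 3)
                       else (if l' = l then 3 else -1)) * p34 k' l'
        = -p34 k l + 3 * p34 k (l+1) + 3 * p34 (k+1) l - p34 (k+1) (l+1) := by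
      rw [sum_fin2 (fun k' => ∑ l', (if k' = k then (if l' = l then (-1:ℝ) else 3)
                       else (if l' = l then 3 else -1)) * p34 k' l') k,
          sum_fin2 (fun l' => (if k = k then (if l' = l then (-1:ℝ) else 3)
                       else (if l' = l then 3 else -1)) * p34 k l') l,
          sum_fin2 (fun l' => (if k+1 = k then (if l' = l then (-1:ℝ) else 3)
                       else (if l' = l then 3 else -1)) * p34 (k+1) l') l]
      simp [hkne, hlne]
      ring
    rw [e12, e23, e34, e14]
    have hXY := (Finset.sum_add_distrib).symm.trans esum
    linarith [hXY, hg1, hg2, hg3, hg5, hg6]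


/-- exact incompatibility index for the chain pattern on
`[r] × [2] × [2] × [2]`. The value `1 ∈ [2]` corresponds to `(0 : Fin 2)` and
`2 ∈ [2]` to `(1 : Fin 2)`. -/
theorem statement_16 (r : ℕ) (hr : 0 < r)
    (p12 : Fin r → Fin 2 → ℝ) (p23 p34 : Fin 2 → Fin 2 → ℝ) (p14 : Fin r → Fin 2 → ℝ)
    (hprob : ProbChain r p12 p23 p34 p14) (hcons : ConsChain r p12 p23 p34 p14) :
    RChain r p12 p23 p34 p14 =
      2 * sSup {t | ∃ k l : Fin 2,
        t = max (p34 k l - p23 1 k - ∑ i, min (p12 i 0) (p14 i l)) 0} := by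
  classical
  set D00 := p34 0 0 - p23 1 0 - ∑ i, min (p12 i 0) (p14 i 0) with hD00
  set D01 := p34 0 1 - p23 1 0 - ∑ i, min (p12 i 0) (p14 i 1) with hD01
  set D10 := p34 1 0 - p23 1 1 - ∑ i, min (p12 i 0) (p14 i 0) with hD10
  set D11 := p34 1 1 - p23 1 1 - ∑ i, min (p12 i 0) (p14 i 1) with hD11
  set M4 := max (max D00 D01) (max D10 D11) with hM4
  obtain ⟨k0, l0, hk0l0⟩ : ∃ k0 l0 : Fin 2,
      M4 = p34 k0 l0 - p23 1 k0 - ∑ i, min (p12 i 0) (p14 i l0) := by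
    rw [hM4]
    rcases le_total D00 D01 with h1 | h1 <;> rcases le_total D10 D11 with h2 | h2 <;>
      rcases le_total (max D00 D01) (max D10 D11) with h3 | h3
    · exact ⟨1, 1, by rw [max_eq_right h3, max_eq_right h2]⟩
    · exact ⟨0, 1, by rw [max_eq_left h3, max_eq_right h1]⟩
    · exact ⟨1, 0, by rw [max_eq_right h3, max_eq_left h2]⟩
    · exact ⟨0, 1, by rw [max_eq_left h3, max_eq_right h1]⟩
    · exact ⟨1, 1, by rw [max_eq_right h3, max_eq_right h2]⟩
    · exact ⟨0, 0, by rw [max_eq_left h3, max_eq_left h1]⟩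
    · exact ⟨1, 0, by rw [max_eq_right h3, max_eq_left h2]⟩
    · exact ⟨0, 0, by rw [max_eq_left h3, max_eq_left h1]⟩
  have hSup2 : sSup {t | ∃ k l : Fin 2,
      t = max (p34 k l - p23 1 k - ∑ i, min (p12 i 0) (p14 i l)) 0} = max M4 0 := by
    apply IsGreatest.csSup_eq
    constructor
    · exact ⟨k0, l0, by rw [← hk0l0]⟩
    · rintro t ⟨k, l, rfl⟩
      have hle : p34 k l - p23 1 k - ∑ i, min (p12 i 0) (p14 i l) ≤ M4 := by
        rcases fin2_em k with rfl | rfl <;> rcases fin2_em l with rfl | rfl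
        · rw [← hD00, hM4]; exact le_max_of_le_left (le_max_left _ _)
        · rw [← hD01, hM4]; exact le_max_of_le_left (le_max_right _ _)
        · rw [← hD10, hM4]; exact le_max_of_le_right (le_max_left _ _)
        · rw [← hD11, hM4]; exact le_max_of_le_right (le_max_right _ _)
      exact max_le (le_trans hle (le_max_left _ _)) (le_max_right _ _)
  have hSup1 : RChain r p12 p23 p34 p14 = 2 * max M4 0 := by
    unfold RChain
    apply IsGreatest.csSup_eq
    constructor
    · rcases le_or_gt M4 0 with hM | hM
      · refine ⟨fun _ _ => 0, fun _ _ => 0, fun _ _ => 0, fun _ _ => 0,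
          fun _ _ => by norm_num, fun _ _ => by norm_num, fun _ _ => by norm_num,
          fun _ _ => by norm_num, fun _ _ _ _ => by norm_num, ?_⟩
        rw [max_eq_right hM]; simp
      · obtain ⟨f12, f23, f34, f14, hb12, hb23, hb34, hb14, hfeas, heq⟩ :=
          lower_bound r p12 p23 p34 p14 hprob hcons k0 l0
        refine ⟨f12, f23, f34, f14, hb12, hb23, hb34, hb14, hfeas, ?_⟩
        rw [heq, ← hk0l0, max_eq_left hM.le]; ring
    · rintro t ⟨f12, f23, f34, f14, hb12, hb23, hb34, hb14, hfeas, rfl⟩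
      have hub := upper_bound r hr p12 p23 p34 p14 hprob hcons f12 f23 f34 f14
        hb12 hb23 hb34 hb14 hfeas
      rw [← hD00, ← hD01, ← hD10, ← hD11, ← hM4] at hub
      exact hub
  rw [hSup1, hSup2]
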